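/- Let (A, α, ℤ₊^d) be a C*-dynamical system. Set 𝒥_F := (⋂_{j∈F} ker α_j)^⊥ for ∅ ≠ F ⊆ [d], 𝒥_∅ := {0}, and 𝓘_F := ⋂_{n ⊥ F} α_n^{-1}(𝒥_F). Then: (a) 𝓘_F ⊆ 𝒥_F for every F ⊆ [d]; (b) the families are partially ordered: F₁ ⊆ F₂ ⊆ [d] implies 𝒥_{F₁} ⊆ 𝒥_{F₂} and 𝓘_{F₁} ⊆ 𝓘_{F₂}; (c) 𝓘_F is F^⊥-invariant: α_n(𝓘_F) ⊆ 𝓘_F for every n ⊥ F; and (d) 𝓘_F is the largest such ideal in 𝒥_F: if K ⊆ 𝒥_F is a two-sided ideal with α_n(K) ⊆ K for all n ⊥ F, then K ⊆ 𝓘_F. (This is the specialisation to C*-dynamical systems of the properties of the families 𝒥 and 𝓘 recorded in Sections 1.3 and 2.3 of the paper.) -/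
import Mathlib


/-- `α_n := α₁^[n₁] ∘ ⋯ ∘ α_d^[n_d]` for `n ∈ ℤ₊^d`. -/
def alphaComp {A : Type*} {d : ℕ} (α : Fin d → (A → A)) (n : Fin d → ℕ) : A → A :=
  (List.finRange d).foldr (fun i f => (α i)^[n i] ∘ f) id

/-- `I` is a two-sided ideal of the (possibly non-unital) ring `A`. -/
def IsTwoSidedIdealSet {A : Type*} [NonUnitalNonAssocRing A] (I : Set A) : Prop :=
  (0 : A) ∈ I ∧ (∀ x ∈ I, ∀ y ∈ I, x + y ∈ I) ∧ (∀ x ∈ I, -x ∈ I) ∧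
    (∀ a : A, ∀ x ∈ I, a * x ∈ I) ∧ (∀ a : A, ∀ x ∈ I, x * a ∈ I)

section Aux

variable {A : Type*} {d : ℕ}

lemma foldr_zero (α : Fin d → (A → A)) (n : Fin d → ℕ) (hn : ∀ i, n i = 0) :
    ∀ (l : List (Fin d)) (a : A), l.foldr (fun i f => (α i)^[n i] ∘ f) id a = a := by
  intro l
  induction l with
  | nil => intro a; rfl
  | cons j l ih => intro a; simp [hn j, ih a]

lemma alphaComp_zero (α : Fin d → (A → A)) (a : A) :
    alphaComp α (fun _ => 0) a = a :=
  foldr_zero α (fun _ => 0) (fun _ => rfl) _ a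

lemma foldr_comm (α : Fin d → (A → A))
    (hcomm : ∀ i j : Fin d, ∀ a : A, α i (α j a) = α j (α i a))
    (i : Fin d) (k : ℕ) (n : Fin d → ℕ) :
    ∀ (l : List (Fin d)) (a : A),
      (α i)^[k] (l.foldr (fun j f => (α j)^[n j] ∘ f) id a)
        = l.foldr (fun j f => (α j)^[n j] ∘ f) id ((α i)^[k] a) := by
  intro l
  induction l with
  | nil => intro a; rfl
  | cons j l ih =>
      intro a
      have hc : Function.Commute (α i) (α j) := hcomm i j
      have := (hc.iterate_iterate k (n j)) (l.foldr (fun j f => (α j)^[n j] ∘ f) id a)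
      simp only [List.foldr_cons, Function.comp_apply] at *
      rw [this, ih a]

lemma foldr_add (α : Fin d → (A → A))
    (hcomm : ∀ i j : Fin d, ∀ a : A, α i (α j a) = α j (α i a))
    (m n : Fin d → ℕ) :
    ∀ (l : List (Fin d)) (a : A),
      l.foldr (fun i f => (α i)^[m i + n i] ∘ f) id a
        = l.foldr (fun i f => (α i)^[m i] ∘ f) id
            (l.foldr (fun i f => (α i)^[n i] ∘ f) id a) := by
  intro l
  induction l with
  | nil => intro a; rfl
  | cons j l ih =>
      intro a
      simp only [List.foldr_cons, Function.comp_apply]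
      rw [Function.iterate_add_apply, ih, ← foldr_comm α hcomm j (n j) m l]

lemma alphaComp_add (α : Fin d → (A → A))
    (hcomm : ∀ i j : Fin d, ∀ a : A, α i (α j a) = α j (α i a))
    (m n : Fin d → ℕ) (a : A) :
    alphaComp α (fun i => m i + n i) a = alphaComp α m (alphaComp α n a) :=
  foldr_add α hcomm m n _ a

end Aux

/-- For a C*-dynamical system `(A, α, ℤ₊^d)`, with
`𝒥_∅ = {0}`, `𝒥_F = (⋂_{j∈F} ker α_j)^⊥` for `F ≠ ∅`, and `𝓘_F = ⋂_{n ⊥ F} α_n⁻¹(𝒥_F)`: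
(a) `𝓘_F ⊆ 𝒥_F`; (b) both families are partially ordered; (c) `𝓘_F` is `F^⊥`-invariant;
(d) `𝓘_F` is the largest `F^⊥`-invariant two-sided ideal contained in `𝒥_F`. -/
theorem stmt_10 {A : Type*} [NonUnitalNormedRing A] [StarRing A] [CStarRing A]
    [NormedSpace ℂ A] [IsScalarTower ℂ A A] [SMulCommClass ℂ A A]
    [CompleteSpace A] [StarModule ℂ A]
    {d : ℕ} (hd : 1 ≤ d) (α : Fin d → (A →⋆ₙₐ[ℂ] A))
    (hcomm : ∀ i j : Fin d, ∀ a : A, α i (α j a) = α j (α i a))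
    (J : Finset (Fin d) → Set A)
    (hJ : ∀ F : Finset (Fin d), J F = if F = ∅ then ({0} : Set A)
      else {a : A | ∀ s : A, (∀ j ∈ F, α j s = 0) → a * s = 0})
    (I : Finset (Fin d) → Set A)
    (hI : ∀ F : Finset (Fin d), I F = ⋂ n ∈ {n : Fin d → ℕ | ∀ i ∈ F, n i = 0},
      (alphaComp (fun i => ⇑(α i)) n) ⁻¹' (J F)) :
    (∀ F : Finset (Fin d), I F ⊆ J F) ∧
    (∀ F₁ F₂ : Finset (Fin d), F₁ ⊆ F₂ → J F₁ ⊆ J F₂ ∧ I F₁ ⊆ I F₂) ∧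
    (∀ F : Finset (Fin d), ∀ n : Fin d → ℕ, (∀ i ∈ F, n i = 0) →
      ∀ a ∈ I F, alphaComp (fun i => ⇑(α i)) n a ∈ I F) ∧
    (∀ F : Finset (Fin d), ∀ K : Set A, IsTwoSidedIdealSet K → K ⊆ J F →
      (∀ n : Fin d → ℕ, (∀ i ∈ F, n i = 0) → ∀ a ∈ K, alphaComp (fun i => ⇑(α i)) n a ∈ K) →
      K ⊆ I F) := by
  -- membership characterization of I F
  have hImem : ∀ F : Finset (Fin d), ∀ a : A,
      a ∈ I F ↔ ∀ n : Fin d → ℕ, (∀ i ∈ F, n i = 0) →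
        alphaComp (fun i => ⇑(α i)) n a ∈ J F := by
    intro F a
    rw [hI F]
    simp [Set.mem_iInter]
  -- J is monotone
  have hJmono : ∀ F₁ F₂ : Finset (Fin d), F₁ ⊆ F₂ → J F₁ ⊆ J F₂ := by
    intro F₁ F₂ hsub a ha
    rw [hJ F₁] at ha
    rw [hJ F₂]
    by_cases h2 : F₂ = ∅
    · have h1 : F₁ = ∅ := Finset.subset_empty.mp (h2 ▸ hsub)
      simpa [h2] using (by simpa [h1] using ha)
    · simp only [h2, if_neg, if_false]
      by_cases h1 : F₁ = ∅
      · simp only [h1, if_true] at ha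
        intro s _
        simp [Set.mem_singleton_iff.mp ha]
      · simp only [h1, if_neg, if_false] at ha
        intro s hs
        exact ha s (fun j hj => hs j (hsub hj))
  have ha' : ∀ F : Finset (Fin d), I F ⊆ J F := by
    intro F a ha
    have := (hImem F a).mp ha (fun _ => 0) (fun _ _ => rfl)
    rwa [show alphaComp (fun i => ⇑(α i)) (fun _ => 0) a = a from
      alphaComp_zero _ a] at this
  refine ⟨ha', ?_, ?_, ?_⟩
  · -- (b)
    intro F₁ F₂ hsub
    refine ⟨hJmono F₁ F₂ hsub, ?_⟩
    intro a ha
    rw [hImem F₂]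
    intro n hn
    exact hJmono F₁ F₂ hsub ((hImem F₁ a).mp ha n (fun i hi => hn i (hsub hi)))
  · -- (c)
    intro F n hn a ha
    rw [hImem F]
    intro m hm
    rw [← alphaComp_add (fun i => ⇑(α i)) (fun i j => hcomm i j) m n a]
    exact (hImem F a).mp ha (fun i => m i + n i) (fun i hi => by simp [hn i hi, hm i hi])
  · -- (d)
    intro F K _hid hKJ hKinv a ha
    rw [hImem F]
    intro n hn
    exact hKJ (hKinv n hn a ha)
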